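/- Let B = (b_0, ..., b_{n-1}) be a skew-symmetric binary sequence of odd length n, and let P = B || b_n for some b_n ∈ {-1,1}. Then E(P) = E(B) + n + 2 b_n δ, where δ = Σ_{u even, 0 ≤ u ≤ n-2} Ĉ_u(B) b_{u+1} and Ĉ_u(B) = C_{n-u-1}(B). -/

import Mathlib

open Finset

private lemma negOnePow_congr (a b : ℕ) (h : a % 2 = b % 2) : (-1 : ℤ) ^ a = (-1) ^ b := by
  conv_lhs => rw [← Nat.div_add_mod a 2]
  conv_rhs => rw [← Nat.div_add_mod b 2]
  rw [pow_add, pow_add, pow_mul, pow_mul, h]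
  norm_num

private lemma skew_refl (l : ℕ) (B : ℕ → ℤ)
    (hskew : ∀ i, 1 ≤ i → i ≤ l → B (l + i) = (-1) ^ i * B (l - i)) :
    ∀ j ≤ 2 * l, B j = (-1) ^ (l + j) * B (2 * l - j) := by
  intro j hj
  rcases lt_trichotomy j l with h | h | h
  · have h1 := hskew (l - j) (by omega) (by omega)
    have e1 : l + (l - j) = 2 * l - j := by omega
    have e2 : l - (l - j) = j := by omega
    rw [e1, e2] at h1
    rw [h1, ← mul_assoc, ← pow_add,
      negOnePow_congr (l + j + (l - j)) 0 (by omega)]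
    norm_num
  · rw [h]
    have e1 : 2 * l - l = l := by omega
    rw [e1, negOnePow_congr (l + l) 0 (by omega)]
    norm_num
  · have h1 := hskew (j - l) (by omega) (by omega)
    have e1 : l + (j - l) = j := by omega
    have e2 : l - (j - l) = 2 * l - j := by omega
    rw [e1, e2] at h1
    rw [h1, negOnePow_congr (j - l) (l + j) (by omega)]

private lemma skew_corr_odd (l : ℕ) (B : ℕ → ℤ)
    (hskew : ∀ i, 1 ≤ i → i ≤ l → B (l + i) = (-1) ^ i * B (l - i))
    (u : ℕ) (hu : u % 2 = 1) (hul : u ≤ 2 * l) :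
    ∑ j ∈ Finset.range (2 * l + 1 - u), B j * B (j + u) = 0 := by
  have key := skew_refl l B hskew
  refine Finset.sum_involution (fun j _ => 2 * l - u - j) ?_ ?_ ?_ ?_
  · intro j hj
    simp only [Finset.mem_range] at hj
    have h1 := key j (by omega)
    have h2 := key (j + u) (by omega)
    have e1 : 2 * l - (j + u) = 2 * l - u - j := by omega
    have e2 : 2 * l - u - j + u = 2 * l - j := by omega
    rw [e1] at h2
    rw [e2, h1, h2]
    have hs : (-1 : ℤ) ^ (l + j) * (-1 : ℤ) ^ (l + (j + u)) = -1 := by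
      rw [← pow_add, negOnePow_congr (l + j + (l + (j + u))) 1 (by omega)]
      norm_num
    linear_combination (B (2 * l - j) * B (2 * l - u - j)) * hs
  · intro j hj _
    simp only [Finset.mem_range] at hj
    simp only [ne_eq]
    omega
  · intro j hj
    simp only [Finset.mem_range] at hj ⊢
    omega
  · intro j hj
    simp only [Finset.mem_range] at hj
    omega

/-- Energy of the appended pseudo-skew-symmetric sequence `P = B || bn`:
`E(P) = E(B) + n + 2 bn δ` with `δ = Σ_{u even, 0 ≤ u ≤ n-2} Ĉ_u(B) b_{u+1}`. -/
theorem pseudoSkewSymmetric_append_energy_formula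
    (l n : ℕ) (B : ℕ → ℤ) (bn : ℤ) (hn : n = 2 * l + 1)
    (hbin : ∀ j < n, B j = 1 ∨ B j = -1)
    (hbn : bn = 1 ∨ bn = -1)
    (hskew : ∀ i, 1 ≤ i → i ≤ l → B (l + i) = (-1) ^ i * B (l - i))
    (P : ℕ → ℤ) (hP : ∀ j, P j = if j = n then bn else B j) :
    ∑ u ∈ Finset.Icc 1 n, (∑ j ∈ Finset.range (n + 1 - u), P j * P (j + u)) ^ 2 =
      (∑ u ∈ Finset.Icc 1 (n - 1), (∑ j ∈ Finset.range (n - u), B j * B (j + u)) ^ 2) +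
        n + 2 * bn *
          ∑ u ∈ (Finset.range (n - 1)).filter (fun u => Even u),
            (∑ j ∈ Finset.range (u + 1), B j * B (j + (n - u - 1))) * B (u + 1) := by
  have hn1 : 1 ≤ n := by omega
  have hPB : ∀ j < n, P j = B j := by
    intro j hj
    rw [hP]
    simp [Nat.ne_of_lt hj]
  have hPn : P n = bn := by rw [hP]; simp
  have hsq : ∀ j < n, B j ^ 2 = 1 := by
    intro j hj; rcases hbin j hj with h | h <;> rw [h] <;> norm_num
  have hbnsq : bn ^ 2 = 1 := by rcases hbn with h | h <;> rw [h] <;> norm_num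
  -- split off the u = n term
  have hins : Finset.Icc 1 n = insert n (Finset.Icc 1 (n - 1)) := by
    ext x; simp only [Finset.mem_Icc, Finset.mem_insert]; omega
  rw [hins, Finset.sum_insert (by simp only [Finset.mem_Icc]; omega)]
  have hterm_n : (∑ j ∈ Finset.range (n + 1 - n), P j * P (j + n)) ^ 2 = 1 := by
    have e1 : n + 1 - n = 1 := by omega
    rw [e1, Finset.sum_range_one, zero_add, hPB 0 (by omega), hPn]
    rcases hbin 0 (by omega) with h | h <;> rcases hbn with h' | h' <;>
      rw [h, h'] <;> norm_num
  rw [hterm_n]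
  -- rewrite each term with u ≤ n - 1
  have hterm : ∀ u ∈ Finset.Icc 1 (n - 1),
      (∑ j ∈ Finset.range (n + 1 - u), P j * P (j + u)) ^ 2 =
      (∑ j ∈ Finset.range (n - u), B j * B (j + u)) ^ 2
        + 2 * bn * ((∑ j ∈ Finset.range (n - u), B j * B (j + u)) * B (n - u)) + 1 := by
    intro u hu
    simp only [Finset.mem_Icc] at hu
    have e1 : n + 1 - u = (n - u) + 1 := by omega
    rw [e1, Finset.sum_range_succ]
    have e2 : n - u + u = n := by omega
    rw [e2, hPn, hPB (n - u) (by omega)]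
    have hc : ∀ j ∈ Finset.range (n - u), P j * P (j + u) = B j * B (j + u) := by
      intro j hj; simp only [Finset.mem_range] at hj
      rw [hPB j (by omega), hPB (j + u) (by omega)]
    rw [Finset.sum_congr rfl hc]
    have h1 : B (n - u) ^ 2 = 1 := hsq (n - u) (by omega)
    linear_combination bn ^ 2 * h1 + hbnsq
  rw [Finset.sum_congr rfl hterm, Finset.sum_add_distrib, Finset.sum_add_distrib,
    Finset.sum_const, ← Finset.mul_sum, Nat.card_Icc]
  -- reindex the cross term
  have hreindex : ∑ u ∈ Finset.Icc 1 (n - 1),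
      (∑ j ∈ Finset.range (n - u), B j * B (j + u)) * B (n - u)
      = ∑ v ∈ Finset.range (n - 1),
      (∑ j ∈ Finset.range (v + 1), B j * B (j + (n - v - 1))) * B (v + 1) := by
    refine Finset.sum_nbij' (fun u => n - 1 - u) (fun v => n - 1 - v) ?_ ?_ ?_ ?_ ?_
    · intro u hu; simp only [Finset.mem_Icc] at hu; simp only [Finset.mem_range]; omega
    · intro v hv; simp only [Finset.mem_range] at hv; simp only [Finset.mem_Icc]; omega
    · intro u hu; simp only [Finset.mem_Icc] at hu
      show n - 1 - (n - 1 - u) = u; omega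
    · intro v hv; simp only [Finset.mem_range] at hv
      show n - 1 - (n - 1 - v) = v; omega
    · intro u hu
      simp only [Finset.mem_Icc] at hu
      have e1 : n - 1 - u + 1 = n - u := by omega
      have e2 : n - (n - 1 - u) - 1 = u := by omega
      rw [e1, e2]
  -- discard the odd terms
  have hfilter : ∑ v ∈ Finset.range (n - 1),
      (∑ j ∈ Finset.range (v + 1), B j * B (j + (n - v - 1))) * B (v + 1)
      = ∑ v ∈ (Finset.range (n - 1)).filter (fun v => Even v),
      (∑ j ∈ Finset.range (v + 1), B j * B (j + (n - v - 1))) * B (v + 1) := by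
    rw [← Finset.sum_filter_add_sum_filter_not (Finset.range (n - 1)) (fun v => Even v)]
    have hz : ∑ v ∈ (Finset.range (n - 1)).filter (fun v => ¬ Even v),
        (∑ j ∈ Finset.range (v + 1), B j * B (j + (n - v - 1))) * B (v + 1) = 0 := by
      apply Finset.sum_eq_zero
      intro v hv
      simp only [Finset.mem_filter, Finset.mem_range, Nat.not_even_iff] at hv
      have hz0 := skew_corr_odd l B hskew (n - v - 1) (by omega) (by omega)
      have e1 : 2 * l + 1 - (n - v - 1) = v + 1 := by omega
      rw [e1] at hz0
      rw [hz0, zero_mul]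
    rw [hz, add_zero]
  rw [hreindex, hfilter]
  have hcard : (n - 1 + 1 - 1) • (1 : ℤ) = (n : ℤ) - 1 := by
    have : n - 1 + 1 - 1 = n - 1 := by omega
    rw [this, nsmul_eq_mul, mul_one]
    omega
  rw [hcard]
  ring
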